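/- Let G be the group with presentation ⟨a, b, c | a^6 = b^6 = c^6 = 1, ab^2 = ba^2, ac^2 = ca^2, bc^2 = cb^2⟩. Then the quotient G'/G'' of the first derived subgroup of G by the second derived subgroup of G is isomorphic to C_4^4, the direct product of four cyclic groups of order 4. -/

import Mathlib

/-- The relators of ⟨a, b, c | a^6 = b^6 = c^6 = 1, ab^2 = ba^2, ac^2 = ca^2, bc^2 = cb^2⟩. -/
def G3rels : Set (FreeGroup (Fin 3)) :=
  {(FreeGroup.of 0) ^ 6, (FreeGroup.of 1) ^ 6, (FreeGroup.of 2) ^ 6,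
   FreeGroup.of 0 * (FreeGroup.of 1) ^ 2 * (FreeGroup.of 1 * (FreeGroup.of 0) ^ 2)⁻¹,
   FreeGroup.of 0 * (FreeGroup.of 2) ^ 2 * (FreeGroup.of 2 * (FreeGroup.of 0) ^ 2)⁻¹,
   FreeGroup.of 1 * (FreeGroup.of 2) ^ 2 * (FreeGroup.of 2 * (FreeGroup.of 1) ^ 2)⁻¹}

/-- The group G(3) = ⟨a, b, c | a^6 = b^6 = c^6 = 1, ab^2 = ba^2, ac^2 = ca^2, bc^2 = cb^2⟩. -/
abbrev G3 : Type := PresentedGroup G3rels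

open scoped commutatorElement


section Key
variable {G : Type*} [Group G] (t u : G)

lemma expand6 (g : G) : g^6 = g*g*g*g*g*g := by
  rw [pow_succ, pow_succ, pow_succ, pow_succ, pow_succ, pow_one]

lemma conj_helper {t p q p' q' : G} (hp : t*p*t⁻¹ = p') (hq : t*q*t⁻¹ = q') :
    t*(p⁻¹*q)*t⁻¹ = p'⁻¹*q' := by subst hp; subst hq; group

lemma keyL1 (hE1 : t*u*t*u = u*t*t) : t*(t*u*t⁻¹)*t⁻¹ = (t*u*t⁻¹)⁻¹*u := by
  rw [eq_inv_mul_iff_mul_eq]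
  calc (t*u*t⁻¹)*(t*(t*u*t⁻¹)*t⁻¹) = (t*u*t*u)*(t⁻¹*t⁻¹) := by group
  _ = (u*t*t)*(t⁻¹*t⁻¹) := by rw [hE1]
  _ = u := by group

lemma keyL2 (hE1 : t*u*t*u = u*t*t) : t⁻¹*u*t = u*(t*u*t⁻¹) := by
  apply mul_left_cancel (a := t)
  calc t*(t⁻¹*u*t) = (u*t*t)*t⁻¹ := by group
  _ = (t*u*t*u)*t⁻¹ := by rw [hE1]
  _ = t*(u*(t*u*t⁻¹)) := by group

lemma keyMain (h6 : t^6 = 1) (hE1 : t*u*t*u = u*t*t) (hE2 : (t*u)^6 = 1)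
    (hc : Commute u (t*u*t⁻¹)) : u^4 = 1 := by
  set x2 : G := t*u*t⁻¹ with hx2
  set x3 : G := x2⁻¹*u with hx3
  set x4 : G := x3⁻¹*x2 with hx4
  set x5 : G := x4⁻¹*x3 with hx5
  set x6 : G := x5⁻¹*x4 with hx6
  have c2 : t*x2*t⁻¹ = x3 := keyL1 t u hE1
  have c3 : t*x3*t⁻¹ = x4 := conj_helper c2 rfl
  have c4 : t*x4*t⁻¹ = x5 := conj_helper c3 c2
  have c5 : t*x5*t⁻¹ = x6 := conj_helper c4 c3
  have e2 : t*t*u*t⁻¹*t⁻¹ = x3 := by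
    calc t*t*u*t⁻¹*t⁻¹ = t*(t*u*t⁻¹)*t⁻¹ := by group
    _ = x3 := c2
  have e3 : t*t*t*u*t⁻¹*t⁻¹*t⁻¹ = x4 := by
    calc t*t*t*u*t⁻¹*t⁻¹*t⁻¹ = t*(t*t*u*t⁻¹*t⁻¹)*t⁻¹ := by group
    _ = x4 := by rw [e2]; exact c3
  have e4 : t*t*t*t*u*t⁻¹*t⁻¹*t⁻¹*t⁻¹ = x5 := by
    calc t*t*t*t*u*t⁻¹*t⁻¹*t⁻¹*t⁻¹ = t*(t*t*t*u*t⁻¹*t⁻¹*t⁻¹)*t⁻¹ := by group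
    _ = x5 := by rw [e3]; exact c4
  have e5 : t*t*t*t*t*u*t⁻¹*t⁻¹*t⁻¹*t⁻¹*t⁻¹ = x6 := by
    calc t*t*t*t*t*u*t⁻¹*t⁻¹*t⁻¹*t⁻¹*t⁻¹ = t*(t*t*t*t*u*t⁻¹*t⁻¹*t⁻¹*t⁻¹)*t⁻¹ := by group
    _ = x6 := by rw [e4]; exact c5
  have h6' : t*t*t*t*t*t = 1 := by rw [← expand6]; exact h6
  have hE2' : t*u*(t*u)*(t*u)*(t*u)*(t*u)*(t*u) = 1 := by
    rw [← expand6]; exact hE2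
  have tele : t*u*(t*u)*(t*u)*(t*u)*(t*u)*(t*u) =
      x2*(t*t*u*t⁻¹*t⁻¹)*(t*t*t*u*t⁻¹*t⁻¹*t⁻¹)*(t*t*t*t*u*t⁻¹*t⁻¹*t⁻¹*t⁻¹)*
      (t*t*t*t*t*u*t⁻¹*t⁻¹*t⁻¹*t⁻¹*t⁻¹)*((t*t*t*t*t*t)*u*(t*t*t*t*t*t)⁻¹)*(t*t*t*t*t*t) := by
    rw [hx2]; group
  rw [e2, e3, e4, e5, h6', hE2'] at tele
  have tele' : (1:G) = x2*x3*x4*x5*x6*u := by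
    calc (1:G) = x2*x3*x4*x5*x6*(1*u*1⁻¹)*1 := tele
    _ = x2*x3*x4*x5*x6*u := by group
  have hq : u⁻¹*(x2*x2)*u = x2*x2 := by
    have h := (hc.mul_right hc).inv_left.eq
    calc u⁻¹*(x2*x2)*u = (u⁻¹*(x2*x2))*u := by group
    _ = ((x2*x2)*u⁻¹)*u := by rw [h]
    _ = x2*x2 := by group
  have hprod : x2*x3*x4*x5*x6*u = x2*x2*x2*x2 := by
    have h4 : x4 = u⁻¹*(x2*x2) := by rw [hx4, hx3]; group
    calc x2*x3*x4*x5*x6*u = u*(x4*x4)*u := by rw [hx6, hx5, hx3]; group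
    _ = u*(u⁻¹*(x2*x2)*(u⁻¹*(x2*x2)))*u := by rw [← h4]
    _ = (x2*x2)*(u⁻¹*(x2*x2)*u) := by group
    _ = (x2*x2)*(x2*x2) := by rw [hq]
    _ = x2*x2*x2*x2 := by group
  have hx24 : x2*x2*x2*x2 = 1 := by rw [← hprod, ← tele']
  have hfin : u*u*u*u = t⁻¹*(x2*x2*x2*x2)*t := by rw [hx2]; group
  have : u^4 = u*u*u*u := by rw [pow_succ, pow_succ, pow_succ, pow_one]
  rw [this, hfin, hx24]; group

end Key

namespace G3w

lemma relG {r : FreeGroup (Fin 3)} (h : r ∈ G3rels) : PresentedGroup.mk G3rels r = 1 := by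
  change QuotientGroup.mk r = 1
  refine (QuotientGroup.eq_one_iff r).mpr ?_
  exact Subgroup.subset_normalClosure h

def a : G3 := PresentedGroup.of 0
def b : G3 := PresentedGroup.of 1
def c : G3 := PresentedGroup.of 2

lemma ha6 : a ^ 6 = 1 := by
  have := relG (show (FreeGroup.of 0)^6 ∈ G3rels by simp [G3rels])
  rwa [map_pow] at this

lemma hb6 : b ^ 6 = 1 := by
  have := relG (show (FreeGroup.of 1)^6 ∈ G3rels by simp [G3rels])
  rwa [map_pow] at this

lemma hc6 : c ^ 6 = 1 := by
  have := relG (show (FreeGroup.of 2)^6 ∈ G3rels by simp [G3rels])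
  rwa [map_pow] at this

lemma hab : a * b ^ 2 = b * a ^ 2 := by
  have := relG (show FreeGroup.of 0 * (FreeGroup.of 1) ^ 2 *
      (FreeGroup.of 1 * (FreeGroup.of 0) ^ 2)⁻¹ ∈ G3rels by simp [G3rels])
  rw [map_mul, map_inv, map_mul, map_pow, map_mul, map_pow, mul_inv_eq_one] at this
  exact this

lemma hac : a * c ^ 2 = c * a ^ 2 := by
  have := relG (show FreeGroup.of 0 * (FreeGroup.of 2) ^ 2 *
      (FreeGroup.of 2 * (FreeGroup.of 0) ^ 2)⁻¹ ∈ G3rels by simp [G3rels])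
  rw [map_mul, map_inv, map_mul, map_pow, map_mul, map_pow, mul_inv_eq_one] at this
  exact this

-- ===== the metabelian quotient K =====

abbrev Gpp : Subgroup G3 := ⁅commutator G3, commutator G3⁆

abbrev K : Type := G3 ⧸ Gpp

def mkK : G3 →* K := QuotientGroup.mk' Gpp

lemma mkK_surj : Function.Surjective mkK := QuotientGroup.mk'_surjective Gpp

def t : K := mkK a
def bb : K := mkK b
def cc : K := mkK c
noncomputable def u : K := t⁻¹ * bb
noncomputable def v : K := t⁻¹ * cc

lemma kt6 : t^6 = 1 := by rw [t, ← map_pow, ha6, map_one]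
lemma kb6 : bb^6 = 1 := by rw [bb, ← map_pow, hb6, map_one]
lemma kc6 : cc^6 = 1 := by rw [cc, ← map_pow, hc6, map_one]
lemma kab : t * bb^2 = bb * t^2 := by
  rw [t, bb, ← map_pow, ← map_pow, ← map_mul, ← map_mul, hab]
lemma kac : t * cc^2 = cc * t^2 := by
  rw [t, cc, ← map_pow, ← map_pow, ← map_mul, ← map_mul, hac]

lemma hbtu : bb = t * u := by rw [u]; group
lemma hctv : cc = t * v := by rw [v]; group

lemma hE1u : t*u*t*u = u*t*t := by
  apply mul_left_cancel (a := t)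
  calc t*(t*u*t*u) = t*((t*u)*(t*u)) := by group
  _ = t*(t*u)^2 := by rw [sq]
  _ = (t*u)*t^2 := by rw [← hbtu]; exact kab
  _ = (t*u)*(t*t) := by rw [sq]
  _ = t*(u*t*t) := by group

lemma hE1v : t*v*t*v = v*t*t := by
  apply mul_left_cancel (a := t)
  calc t*(t*v*t*v) = t*((t*v)*(t*v)) := by group
  _ = t*(t*v)^2 := by rw [sq]
  _ = (t*v)*t^2 := by rw [← hctv]; exact kac
  _ = (t*v)*(t*t) := by rw [sq]
  _ = t*(v*t*t) := by group

lemma hE2u : (t*u)^6 = 1 := by rw [← hbtu]; exact kb6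
lemma hE2v : (t*v)^6 = 1 := by rw [← hctv]; exact kc6

-- ===== commutator membership =====

lemma mem_comm_iff {G : Type*} [Group G] (x : G) :
    x ∈ commutator G ↔ Abelianization.of x = 1 :=
  (QuotientGroup.eq_one_iff (N := commutator G) x).symm

lemma abel_eq {A : Type*} [CommGroup A] (x y : A) (h : x*y^2 = y*x^2) : y = x := by
  apply mul_left_cancel (a := x*y)
  calc (x*y)*y = x*y^2 := by rw [sq, mul_assoc]
  _ = y*x^2 := h
  _ = (x*y)*x := by rw [sq]; rw [← mul_assoc, mul_comm y x]

lemma ab_tb : Abelianization.of bb = Abelianization.of t := by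
  apply abel_eq
  have := congrArg Abelianization.of kab
  rwa [map_mul, map_mul, map_pow, map_pow] at this

lemma ab_tc : Abelianization.of cc = Abelianization.of t := by
  apply abel_eq
  have := congrArg Abelianization.of kac
  rwa [map_mul, map_mul, map_pow, map_pow] at this

lemma hu_mem : u ∈ commutator K := by
  rw [mem_comm_iff, u, map_mul, map_inv, ab_tb, inv_mul_cancel]

lemma hv_mem : v ∈ commutator K := by
  rw [mem_comm_iff, v, map_mul, map_inv, ab_tc, inv_mul_cancel]

lemma conj_mem_comm {x : K} (h : x ∈ commutator K) (g : K) :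
    g*x*g⁻¹ ∈ commutator K := by
  rw [mem_comm_iff] at h ⊢
  rw [map_mul, map_mul, map_inv, h, mul_one, mul_inv_cancel]

lemma hu2_mem : t*u*t⁻¹ ∈ commutator K := conj_mem_comm hu_mem t
lemma hv2_mem : t*v*t⁻¹ ∈ commutator K := conj_mem_comm hv_mem t

-- ===== commutator K is commutative =====

lemma commK_map : commutator K = Subgroup.map mkK (commutator G3) := by
  have htop : Subgroup.map mkK ⊤ = ⊤ := by
    rw [← MonoidHom.range_eq_map]
    exact MonoidHom.range_eq_top.2 mkK_surj
  calc commutator K = ⁅(⊤ : Subgroup K), ⊤⁆ := rfl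
  _ = ⁅Subgroup.map mkK ⊤, Subgroup.map mkK ⊤⁆ := by rw [htop]
  _ = Subgroup.map mkK ⁅(⊤ : Subgroup G3), ⊤⁆ := (Subgroup.map_commutator ⊤ ⊤ mkK).symm
  _ = Subgroup.map mkK (commutator G3) := rfl

lemma commKcommK_bot : ⁅commutator K, commutator K⁆ = ⊥ := by
  rw [commK_map, ← Subgroup.map_commutator]
  rw [eq_bot_iff]
  rintro x ⟨g, hg, rfl⟩
  have : mkK g = 1 := (QuotientGroup.eq_one_iff g).mpr hg
  simp [this]

lemma commK_comm {x y : K} (hx : x ∈ commutator K) (hy : y ∈ commutator K) :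
    Commute x y := by
  have : ⁅x, y⁆ ∈ (⊥ : Subgroup K) := by
    rw [← commKcommK_bot]; exact Subgroup.commutator_mem_commutator hx hy
  rw [Subgroup.mem_bot] at this
  exact commutatorElement_eq_one_iff_commute.mp this

lemma hu4 : u^4 = 1 :=
  keyMain t u kt6 hE1u hE2u (commK_comm hu_mem hu2_mem)
lemma hv4 : v^4 = 1 :=
  keyMain t v kt6 hE1v hE2v (commK_comm hv_mem hv2_mem)
lemma hu24 : (t*u*t⁻¹)^4 = 1 := by
  have : (t*u*t⁻¹)^4 = t*u^4*t⁻¹ := by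
    rw [pow_succ, pow_succ, pow_succ, pow_one, pow_succ, pow_succ, pow_succ, pow_one]; group
  rw [this, hu4]; group
lemma hv24 : (t*v*t⁻¹)^4 = 1 := by
  have : (t*v*t⁻¹)^4 = t*v^4*t⁻¹ := by
    rw [pow_succ, pow_succ, pow_succ, pow_one, pow_succ, pow_succ, pow_succ, pow_one]; group
  rw [this, hv4]; group

end G3w
namespace G3w

noncomputable def Sgens : Set K := {u, t*u*t⁻¹, v, t*v*t⁻¹}

noncomputable def S : Subgroup K := Subgroup.closure Sgens

lemma gens_mem_comm : ∀ x ∈ Sgens, x ∈ commutator K := by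
  rintro x (rfl | rfl | rfl | rfl)
  · exact hu_mem
  · exact hu2_mem
  · exact hv_mem
  · exact hv2_mem

lemma hS_le : S ≤ commutator K := (Subgroup.closure_le _).mpr gens_mem_comm

lemma u_mem_S : u ∈ S := Subgroup.subset_closure (by left; rfl)
lemma u2_mem_S : t*u*t⁻¹ ∈ S := Subgroup.subset_closure (by right; left; rfl)
lemma v_mem_S : v ∈ S := Subgroup.subset_closure (by right; right; left; rfl)
lemma v2_mem_S : t*v*t⁻¹ ∈ S := Subgroup.subset_closure (by right; right; right; rfl)

lemma conjT_S : ∀ x ∈ S, t*x*t⁻¹ ∈ S ∧ t⁻¹*x*t ∈ S := by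
  intro x hx
  induction hx using Subgroup.closure_induction with
  | mem y hy =>
    rcases hy with rfl | rfl | rfl | rfl
    · exact ⟨u2_mem_S, by rw [keyL2 t u hE1u]; exact S.mul_mem u_mem_S u2_mem_S⟩
    · constructor
      · rw [keyL1 t u hE1u]; exact S.mul_mem (S.inv_mem u2_mem_S) u_mem_S
      · have : t⁻¹*(t*u*t⁻¹)*t = u := by group
        rw [this]; exact u_mem_S
    · exact ⟨v2_mem_S, by rw [keyL2 t v hE1v]; exact S.mul_mem v_mem_S v2_mem_S⟩
    · constructor
      · rw [keyL1 t v hE1v]; exact S.mul_mem (S.inv_mem v2_mem_S) v_mem_S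
      · have : t⁻¹*(t*v*t⁻¹)*t = v := by group
        rw [this]; exact v_mem_S
  | one => constructor <;> simpa using S.one_mem
  | mul y z hy hz ihy ihz =>
    constructor
    · have : t*(y*z)*t⁻¹ = (t*y*t⁻¹)*(t*z*t⁻¹) := by group
      rw [this]; exact S.mul_mem ihy.1 ihz.1
    · have : t⁻¹*(y*z)*t = (t⁻¹*y*t)*(t⁻¹*z*t) := by group
      rw [this]; exact S.mul_mem ihy.2 ihz.2
  | inv y hy ihy =>
    constructor
    · have : t*y⁻¹*t⁻¹ = (t*y*t⁻¹)⁻¹ := by group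
      rw [this]; exact S.inv_mem ihy.1
    · have : t⁻¹*y⁻¹*t = (t⁻¹*y*t)⁻¹ := by group
      rw [this]; exact S.inv_mem ihy.2

/-- elements of `commutator K` conjugate `S` trivially -/
lemma conj_comm_S {g : K} (hg : g ∈ commutator K) : ∀ x ∈ S, g*x*g⁻¹ ∈ S := by
  intro x hx
  have : g*x*g⁻¹ = x := by
    have h := (commK_comm hg (hS_le hx)).eq
    rw [h]; group
  rw [this]; exact hx

/-- the subgroup of elements normalizing `S` in both directions -/
noncomputable def NS : Subgroup K where
  carrier := {g | ∀ x ∈ S, g*x*g⁻¹ ∈ S ∧ g⁻¹*x*g ∈ S}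
  one_mem' := by intro x hx; constructor <;> · simpa
  mul_mem' := by
    rintro g h hg hh
    intro x hx
    constructor
    · have : g*h*x*(g*h)⁻¹ = g*(h*x*h⁻¹)*g⁻¹ := by group
      rw [this]; exact (hg _ (hh x hx).1).1
    · have : (g*h)⁻¹*x*(g*h) = h⁻¹*(g⁻¹*x*g)*h := by group
      rw [this]; exact (hh _ (hg x hx).2).2
  inv_mem' := by
    intro g hg x hx
    constructor
    · have : g⁻¹*x*(g⁻¹)⁻¹ = g⁻¹*x*g := by group
      rw [this]; exact (hg x hx).2
    · have : (g⁻¹)⁻¹*x*g⁻¹ = g*x*g⁻¹ := by group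
      rw [this]; exact (hg x hx).1

lemma t_mem_NS : t ∈ NS := fun x hx => conjT_S x hx

lemma mem_comm_NS {g : K} (hg : g ∈ commutator K) : g ∈ NS := by
  intro x hx
  exact ⟨conj_comm_S hg x hx, by
    have : g⁻¹*x*g = g⁻¹*x*(g⁻¹)⁻¹ := by group
    rw [this]; exact conj_comm_S ((commutator K).inv_mem hg) x hx⟩

lemma NS_top : ∀ g : K, g ∈ NS := by
  intro g
  obtain ⟨x, rfl⟩ := mkK_surj g
  refine PresentedGroup.generated_by G3rels (Subgroup.comap mkK NS) ?_ x
  intro j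
  fin_cases j
  · exact t_mem_NS
  · show mkK b ∈ NS
    have : mkK b = bb := rfl
    rw [this, hbtu]
    exact NS.mul_mem t_mem_NS (mem_comm_NS hu_mem)
  · show mkK c ∈ NS
    have : mkK c = cc := rfl
    rw [this, hctv]
    exact NS.mul_mem t_mem_NS (mem_comm_NS hv_mem)

instance S_normal : S.Normal := by
  constructor
  intro x hx g
  exact ((NS_top g) x hx).1

noncomputable def NC : Subgroup K := Subgroup.normalClosure {u, v}

lemma NC_le_S : NC ≤ S :=
  Subgroup.normalClosure_le_normal (by
    rintro x (rfl | rfl)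
    · exact u_mem_S
    · exact v_mem_S)

lemma commK_le_NC : commutator K ≤ NC := by
  have hNCnormal : NC.Normal := Subgroup.normalClosure_normal
  -- quotient by NC is generated by the image of t
  have hzp : ∀ g : K, QuotientGroup.mk' NC g ∈ Subgroup.zpowers (QuotientGroup.mk' NC t) := by
    intro g
    obtain ⟨x, rfl⟩ := mkK_surj g
    refine PresentedGroup.generated_by G3rels
      (Subgroup.comap ((QuotientGroup.mk' NC).comp mkK)
        (Subgroup.zpowers (QuotientGroup.mk' NC t))) ?_ x
    intro j
    have hu1 : QuotientGroup.mk' NC u = 1 := by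
      rw [QuotientGroup.mk'_apply, QuotientGroup.eq_one_iff]
      exact Subgroup.subset_normalClosure (by left; rfl)
    have hv1 : QuotientGroup.mk' NC v = 1 := by
      rw [QuotientGroup.mk'_apply, QuotientGroup.eq_one_iff]
      exact Subgroup.subset_normalClosure (by right; rfl)
    fin_cases j
    · exact Subgroup.mem_zpowers _
    · rw [Subgroup.mem_comap]
      have hb : ((QuotientGroup.mk' NC).comp mkK) (PresentedGroup.of ((fun i => i) ⟨1, by omega⟩)) =
          (QuotientGroup.mk' NC) bb := rfl
      rw [hb, hbtu, map_mul, hu1, mul_one]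
      exact Subgroup.mem_zpowers _
    · rw [Subgroup.mem_comap]
      have hc : ((QuotientGroup.mk' NC).comp mkK) (PresentedGroup.of ((fun i => i) ⟨2, by omega⟩)) =
          (QuotientGroup.mk' NC) cc := rfl
      rw [hc, hctv, map_mul, hv1, mul_one]
      exact Subgroup.mem_zpowers _
  have key : ∀ g1 g2 : K, ⁅g1, g2⁆ ∈ NC := by
    intro g1 g2
    have h1 : (QuotientGroup.mk' NC) ⁅g1, g2⁆ = 1 := by
      rw [map_commutatorElement]
      obtain ⟨m, hm⟩ := hzp g1
      obtain ⟨n, hn⟩ := hzp g2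
      rw [← hm, ← hn]
      exact commutatorElement_eq_one_iff_commute.mpr (Commute.zpow_zpow (Commute.refl _) m n)
    rw [QuotientGroup.mk'_apply, QuotientGroup.eq_one_iff] at h1
    exact h1
  have : (⁅(⊤ : Subgroup K), ⊤⁆ : Subgroup K) ≤ NC :=
    Subgroup.commutator_le.mpr (fun g1 _ g2 _ => key g1 g2)
  exact this

lemma S_eq_commK : S = commutator K :=
  le_antisymm hS_le (le_trans commK_le_NC NC_le_S)

end G3w
-- ===================== The concrete group H ======================
set_option maxRecDepth 100000

abbrev V : Type := Fin 4 → ZMod 4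

def Pfun : V → V := fun c => ![c 1, c 0 - c 1, c 3, c 2 - c 3]
def Qfun : V → V := fun c => ![c 0 + c 1, c 0, c 2 + c 3, c 2]

lemma PQ : ∀ c : V, Pfun (Qfun c) = c := by decide
lemma QP : ∀ c : V, Qfun (Pfun c) = c := by decide
lemma Padd : ∀ c d : V, Pfun (c + d) = Pfun c + Pfun d := by
  intro c d; unfold Pfun; ext i; fin_cases i <;> simp <;> ring

def P : MulAut (Multiplicative V) where
  toFun x := Multiplicative.ofAdd (Pfun x.toAdd)
  invFun x := Multiplicative.ofAdd (Qfun x.toAdd)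
  left_inv x := congrArg Multiplicative.ofAdd (QP x.toAdd)
  right_inv x := congrArg Multiplicative.ofAdd (PQ x.toAdd)
  map_mul' x y := congrArg Multiplicative.ofAdd (Padd x.toAdd y.toAdd)

lemma P6' : ∀ x, P (P (P (P (P (P x))))) = x := by decide

lemma P6 : P ^ (6:ℕ) = 1 := by
  refine MulEquiv.ext fun x => ?_
  show (P^(6:ℕ)) x = x
  have : (P^(6:ℕ)) x = P (P (P (P (P (P x))))) := by
    rw [pow_succ, pow_succ, pow_succ, pow_succ, pow_succ, pow_succ, pow_zero]
    simp [MulAut.mul_apply]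
  rw [this, P6']

lemma pow_mod_of_pow_eq_one {M : Type*} [Monoid M] {x : M} {n : ℕ} (h : x^n = 1)
    (m : ℕ) : x^m = x^(m % n) := by
  conv_lhs => rw [← Nat.div_add_mod m n]
  rw [pow_add, pow_mul, h, one_pow, one_mul]

def pihom : Multiplicative (ZMod 6) →* MulAut (Multiplicative V) where
  toFun k := P ^ (k.toAdd.val)
  map_one' := by
    show P ^ (0 : ZMod 6).val = 1
    rw [ZMod.val_zero, pow_zero]
  map_mul' x y := by
    show P ^ (x.toAdd + y.toAdd).val = P ^ x.toAdd.val * P ^ y.toAdd.val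
    rw [ZMod.val_add, ← pow_mod_of_pow_eq_one P6, pow_add]

abbrev H : Type := SemidirectProduct (Multiplicative V) (Multiplicative (ZMod 6)) pihom

instance : DecidableEq H := fun x y =>
  decidable_of_iff (x.left = y.left ∧ x.right = y.right)
    (by constructor
        · rintro ⟨h1, h2⟩; cases x; cases y; simp_all
        · rintro rfl; exact ⟨rfl, rfl⟩)

def fH : Fin 3 → H :=
  ![⟨1, Multiplicative.ofAdd 1⟩,
    ⟨Multiplicative.ofAdd ![0,1,0,0], Multiplicative.ofAdd 1⟩,
    ⟨Multiplicative.ofAdd ![0,0,0,1], Multiplicative.ofAdd 1⟩]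

lemma right_one_commute (x y : H) (hx : x.right = 1) (hy : y.right = 1) :
    Commute x y := by
  have hx' : x = SemidirectProduct.inl x.left := by
    cases x; cases hx; rfl
  have hy' : y = SemidirectProduct.inl y.left := by
    cases y; cases hy; rfl
  rw [hx', hy']
  unfold Commute SemiconjBy
  rw [← map_mul, ← map_mul, mul_comm]

namespace G3w

lemma hrels : ∀ r ∈ G3rels, FreeGroup.lift fH r = 1 := by
  intro r hr
  simp only [G3rels, Set.mem_insert_iff, Set.mem_singleton_iff] at hr
  rcases hr with rfl | rfl | rfl | rfl | rfl | rfl <;>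
    · simp only [map_mul, map_pow, map_inv, FreeGroup.lift_apply_of]
      decide

noncomputable def phi : G3 →* H := PresentedGroup.toGroup hrels

lemma phi_a : phi a = fH 0 := PresentedGroup.toGroup.of hrels
lemma phi_b : phi b = fH 1 := PresentedGroup.toGroup.of hrels
lemma phi_c : phi c = fH 2 := PresentedGroup.toGroup.of hrels

lemma phi_comm_right {g : G3} (hg : g ∈ commutator G3) :
    (phi g).right = 1 := by
  have h : commutator G3 ≤ (SemidirectProduct.rightHom.comp phi).ker :=
    Abelianization.commutator_subset_ker _
  exact h hg

lemma Gpp_le_ker : Gpp ≤ phi.ker := by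
  have : (⁅commutator G3, commutator G3⁆ : Subgroup G3) ≤ phi.ker := by
    rw [Subgroup.commutator_le]
    intro g1 hg1 g2 hg2
    rw [MonoidHom.mem_ker, map_commutatorElement]
    exact commutatorElement_eq_one_iff_commute.mpr
      (right_one_commute _ _ (phi_comm_right hg1) (phi_comm_right hg2))
  exact this

noncomputable def phibar : K →* H :=
  QuotientGroup.lift Gpp phi (fun g hg => MonoidHom.mem_ker.mp (Gpp_le_ker hg))

lemma phibar_t : phibar t = fH 0 := phi_a
lemma phibar_b : phibar bb = fH 1 := phi_b
lemma phibar_c : phibar cc = fH 2 := phi_c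

lemma phibar_comm_right {x : K} (hx : x ∈ commutator K) :
    (phibar x).right = 1 := by
  have h : commutator K ≤ (SemidirectProduct.rightHom.comp phibar).ker :=
    Abelianization.commutator_subset_ker _
  exact h hx

/-- extraction of the translation part on the derived subgroup -/
noncomputable def theta : ↥(commutator K) →* Multiplicative V where
  toFun x := (phibar ↑x).left
  map_one' := by
    show (phibar 1).left = 1
    rw [map_one]; rfl
  map_mul' x y := by
    show (phibar (↑x * ↑y)).left = _
    rw [map_mul, SemidirectProduct.mul_left, phibar_comm_right x.2, map_one,
      MulAut.one_apply]

end G3w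
-- ===================== ψ' : C4⁴ → commutator K ======================
namespace G3w

open scoped IsMulCommutative

instance commK_isComm : IsMulCommutative ↥(commutator K) :=
  ⟨⟨fun x y => Subtype.ext (commK_comm x.2 y.2).eq⟩⟩

noncomputable def X : Fin 4 → ↥(commutator K) :=
  ![⟨u, hu_mem⟩, ⟨t*u*t⁻¹, hu2_mem⟩, ⟨v, hv_mem⟩, ⟨t*v*t⁻¹, hv2_mem⟩]

lemma X4 : ∀ i, (X i)^4 = 1 := by
  intro i
  fin_cases i <;>
    · apply Subtype.ext
      rw [SubmonoidClass.coe_pow]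
      first
      | exact hu4
      | exact hu24
      | exact hv4
      | exact hv24

/-- homomorphism from `Multiplicative (ZMod 4)` sending the generator to an
element of order dividing 4 -/
def zmfour {M : Type*} [Group M] (x : M) (hx : x^4 = 1) :
    Multiplicative (ZMod 4) →* M where
  toFun z := x ^ (z.toAdd.val)
  map_one' := by
    show x ^ (0 : ZMod 4).val = 1
    rw [ZMod.val_zero, pow_zero]
  map_mul' z w := by
    show x ^ ((z.toAdd + w.toAdd).val) = _
    rw [ZMod.val_add, ← pow_mod_of_pow_eq_one hx, pow_add]

lemma zmfour_gen {M : Type*} [Group M] (x : M) (hx : x^4 = 1) :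
    zmfour x hx (Multiplicative.ofAdd 1) = x := by
  show x ^ (1 : ZMod 4).val = x
  have h1 : (1 : ZMod 4).val = 1 := rfl
  rw [h1, pow_one]

noncomputable def psi : (Fin 4 → Multiplicative (ZMod 4)) →* ↥(commutator K) :=
  MonoidHom.noncommPiCoprod (fun i => zmfour (X i) (X4 i))
    (fun _ _ _ x y => Commute.all _ _)

lemma psi_single (i : Fin 4) :
    psi (Pi.mulSingle i (Multiplicative.ofAdd 1)) = X i := by
  rw [psi]
  erw [MonoidHom.noncommPiCoprod_mulSingle, zmfour_gen]

lemma X_mem_range : ∀ i, X i ∈ psi.range :=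
  fun i => ⟨Pi.mulSingle i (Multiplicative.ofAdd 1), psi_single i⟩

lemma psi_surj : Function.Surjective psi := by
  rintro ⟨k, hk⟩
  have hkS : k ∈ S := by rw [S_eq_commK]; exact hk
  suffices h : ∀ x (hx : x ∈ S) (hx' : x ∈ commutator K),
      (⟨x, hx'⟩ : ↥(commutator K)) ∈ psi.range by
    exact h k hkS hk
  intro x hx
  induction hx using Subgroup.closure_induction with
  | mem y hy =>
    intro hy'
    rcases hy with rfl | rfl | rfl | rfl
    · have e : (⟨u, hy'⟩ : ↥(commutator K)) = X 0 := Subtype.ext rfl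
      rw [e]; exact X_mem_range 0
    · have e : (⟨t*u*t⁻¹, hy'⟩ : ↥(commutator K)) = X 1 := Subtype.ext rfl
      rw [e]; exact X_mem_range 1
    · have e : (⟨v, hy'⟩ : ↥(commutator K)) = X 2 := Subtype.ext rfl
      rw [e]; exact X_mem_range 2
    · have e : (⟨t*v*t⁻¹, hy'⟩ : ↥(commutator K)) = X 3 := Subtype.ext rfl
      rw [e]; exact X_mem_range 3
  | one =>
    intro h'
    exact (show (⟨1, h'⟩ : ↥(commutator K)) = 1 from Subtype.ext rfl) ▸ psi.range.one_mem
  | mul y z hy hz ihy ihz =>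
    intro h'
    have hy' : y ∈ commutator K := hS_le hy
    have hz' : z ∈ commutator K := hS_le hz
    have : (⟨y*z, h'⟩ : ↥(commutator K)) = ⟨y, hy'⟩ * ⟨z, hz'⟩ := Subtype.ext rfl
    rw [this]
    exact psi.range.mul_mem (ihy hy') (ihz hz')
  | inv y hy ihy =>
    intro h'
    have hy' : y ∈ commutator K := hS_le hy
    have : (⟨y⁻¹, h'⟩ : ↥(commutator K)) = (⟨y, hy'⟩ : ↥(commutator K))⁻¹ := Subtype.ext rfl
    rw [this]
    exact psi.range.inv_mem (ihy hy')

-- ===================== the composite θ ∘ ψ ======================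

def iota : (Fin 4 → Multiplicative (ZMod 4)) ≃* Multiplicative V where
  toFun f := Multiplicative.ofAdd (fun i => (f i).toAdd)
  invFun g := fun i => Multiplicative.ofAdd (g.toAdd i)
  left_inv f := rfl
  right_inv g := rfl
  map_mul' f g := rfl

lemma theta_X0 : theta (X 0) = Multiplicative.ofAdd ![1,0,0,0] := by
  show (phibar u).left = _
  rw [u, map_mul, map_inv, phibar_t, phibar_b]
  decide

lemma theta_X1 : theta (X 1) = Multiplicative.ofAdd ![0,1,0,0] := by
  show (phibar (t*u*t⁻¹)).left = _
  rw [u, map_mul, map_mul, map_inv, map_mul, map_inv, phibar_t, phibar_b]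
  decide

lemma theta_X2 : theta (X 2) = Multiplicative.ofAdd ![0,0,1,0] := by
  show (phibar v).left = _
  rw [v, map_mul, map_inv, phibar_t, phibar_c]
  decide

lemma theta_X3 : theta (X 3) = Multiplicative.ofAdd ![0,0,0,1] := by
  show (phibar (t*v*t⁻¹)).left = _
  rw [v, map_mul, map_mul, map_inv, map_mul, map_inv, phibar_t, phibar_c]
  decide

lemma hom_ext_zmod4 {M : Type*} [Monoid M] (f g : Multiplicative (ZMod 4) →* M)
    (h : f (Multiplicative.ofAdd 1) = g (Multiplicative.ofAdd 1)) : f = g := by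
  refine MonoidHom.ext fun z => ?_
  have h1 : ((z.toAdd.val : ℕ) : ZMod 4) = z.toAdd := ZMod.natCast_rightInverse z.toAdd
  have hz : z = (Multiplicative.ofAdd (1 : ZMod 4)) ^ (z.toAdd.val) := by
    rw [← ofAdd_nsmul]
    rw [nsmul_eq_mul, mul_one, h1]
    rfl
  rw [hz, map_pow, map_pow, h]

lemma rho_eq_iota : theta.comp psi = iota.toMonoidHom := by
  apply MonoidHom.functions_ext
  intro i
  have : ∀ (F : (Fin 4 → Multiplicative (ZMod 4)) →* Multiplicative V),
      F.comp (MonoidHom.mulSingle _ i) (Multiplicative.ofAdd 1)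
        = F (Pi.mulSingle i (Multiplicative.ofAdd 1)) := fun _ => rfl
  have key : (theta.comp psi).comp (MonoidHom.mulSingle _ i)
      = iota.toMonoidHom.comp (MonoidHom.mulSingle _ i) := by
    apply hom_ext_zmod4
    rw [this, this]
    show theta (psi (Pi.mulSingle i (Multiplicative.ofAdd 1))) = _
    rw [psi_single]
    fin_cases i
    · show theta (X 0) = iota.toMonoidHom (Pi.mulSingle 0 (Multiplicative.ofAdd 1))
      rw [theta_X0]; decide
    · show theta (X 1) = iota.toMonoidHom (Pi.mulSingle 1 (Multiplicative.ofAdd 1))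
      rw [theta_X1]; decide
    · show theta (X 2) = iota.toMonoidHom (Pi.mulSingle 2 (Multiplicative.ofAdd 1))
      rw [theta_X2]; decide
    · show theta (X 3) = iota.toMonoidHom (Pi.mulSingle 3 (Multiplicative.ofAdd 1))
      rw [theta_X3]; decide
  intro x
  exact DFunLike.congr_fun key x

lemma psi_inj : Function.Injective psi := by
  have hcomp : Function.Injective (theta.comp psi) := by
    rw [rho_eq_iota]
    exact iota.injective
  intro x y h
  apply hcomp
  show theta (psi x) = theta (psi y)
  rw [h]

noncomputable def equivPsi : (Fin 4 → Multiplicative (ZMod 4)) ≃* ↥(commutator K) :=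
  MulEquiv.ofBijective psi ⟨psi_inj, psi_surj⟩

-- ===================== Ab(commutator G3) ≃ commutator K ======================

lemma Gpp_le_commG3 : Gpp ≤ commutator G3 := Subgroup.commutator_le_left _ _

lemma mem_commK_of_mem (x : G3) (hx : x ∈ commutator G3) : mkK x ∈ commutator K := by
  rw [commK_map]
  exact ⟨x, hx, rfl⟩

noncomputable def dd : ↥(commutator G3) →* ↥(commutator K) :=
  (mkK.comp (commutator G3).subtype).codRestrict (commutator K)
    (fun x => mem_commK_of_mem ↑x x.2)

lemma dd_apply (x : ↥(commutator G3)) : (dd x : K) = mkK ↑x := rfl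

noncomputable def ddbar : Abelianization ↥(commutator G3) →* ↥(commutator K) :=
  Abelianization.lift dd

lemma of_surj : Function.Surjective
    (Abelianization.of : ↥(commutator G3) →* Abelianization ↥(commutator G3)) :=
  fun q => Quotient.inductionOn' q (fun x => ⟨x, rfl⟩)

lemma ddbar_surj : Function.Surjective ddbar := by
  rintro ⟨y, hy⟩
  rw [commK_map] at hy
  obtain ⟨x, hx, rfl⟩ := hy
  exact ⟨Abelianization.of ⟨x, hx⟩, Subtype.ext rfl⟩

lemma mem_comm_sub {x : G3} (h : x ∈ Gpp) :
    ∀ (hx : x ∈ commutator G3),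
      (⟨x, hx⟩ : ↥(commutator G3)) ∈ commutator ↥(commutator G3) := by
  have h' : x ∈ Subgroup.closure
      {g : G3 | ∃ g₁ ∈ commutator G3, ∃ g₂ ∈ commutator G3, ⁅g₁, g₂⁆ = g} := by
    rw [← Subgroup.commutator_def]; exact h
  induction h' using Subgroup.closure_induction with
  | mem y hy =>
    intro hxc
    obtain ⟨g1, hg1, g2, hg2, rfl⟩ := hy
    have : (⟨⁅g1, g2⁆, hxc⟩ : ↥(commutator G3))
        = ⁅(⟨g1, hg1⟩ : ↥(commutator G3)), (⟨g2, hg2⟩ : ↥(commutator G3))⁆ :=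
      Subtype.ext rfl
    rw [this]
    exact Subgroup.commutator_mem_commutator (Subgroup.mem_top _) (Subgroup.mem_top _)
  | one =>
    intro hxc
    exact (show (⟨1, hxc⟩ : ↥(commutator G3)) = 1 from Subtype.ext rfl) ▸
      (commutator ↥(commutator G3)).one_mem
  | mul y z hy hz ihy ihz =>
    intro hxc
    have hGeq : Gpp = Subgroup.closure
        {g : G3 | ∃ g₁ ∈ commutator G3, ∃ g₂ ∈ commutator G3, ⁅g₁, g₂⁆ = g} :=
      Subgroup.commutator_def _ _
    have hyG : y ∈ Gpp := by rw [hGeq]; exact hy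
    have hzG : z ∈ Gpp := by rw [hGeq]; exact hz
    have hy' : y ∈ commutator G3 := Gpp_le_commG3 hyG
    have hz' : z ∈ commutator G3 := Gpp_le_commG3 hzG
    have e : (⟨y*z, hxc⟩ : ↥(commutator G3)) = ⟨y, hy'⟩ * ⟨z, hz'⟩ := Subtype.ext rfl
    rw [e]
    exact (commutator ↥(commutator G3)).mul_mem (ihy hyG hy') (ihz hzG hz')
  | inv y hy ihy =>
    intro hxc
    have hGeq : Gpp = Subgroup.closure
        {g : G3 | ∃ g₁ ∈ commutator G3, ∃ g₂ ∈ commutator G3, ⁅g₁, g₂⁆ = g} :=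
      Subgroup.commutator_def _ _
    have hyG : y ∈ Gpp := by rw [hGeq]; exact hy
    have hy' : y ∈ commutator G3 := Gpp_le_commG3 hyG
    have e : (⟨y⁻¹, hxc⟩ : ↥(commutator G3)) = (⟨y, hy'⟩ : ↥(commutator G3))⁻¹ := Subtype.ext rfl
    rw [e]
    exact (commutator ↥(commutator G3)).inv_mem (ihy hyG hy')

lemma ddbar_inj : Function.Injective ddbar := by
  rw [injective_iff_map_eq_one]
  intro q hq
  obtain ⟨x, rfl⟩ := of_surj q
  have h1 : (dd x : K) = 1 := by
    have : ddbar (Abelianization.of x) = dd x := Abelianization.lift_apply_of (f := dd) x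
    rw [this] at hq
    rw [hq]; rfl
  rw [dd_apply] at h1
  have h2 : (↑x : G3) ∈ Gpp := (QuotientGroup.eq_one_iff _).mp h1
  have h3 : x ∈ commutator ↥(commutator G3) := by
    have := mem_comm_sub h2 x.2
    simpa using this
  rw [mem_comm_iff] at h3
  exact h3

noncomputable def equivDD : Abelianization ↥(commutator G3) ≃* ↥(commutator K) :=
  MulEquiv.ofBijective ddbar ⟨ddbar_inj, ddbar_surj⟩

end G3w

/-- G'/G'' ≅ C₄⁴ for G(3): the abelianization of the derived subgroup of G(3)
is the direct product of four cyclic groups of order 4. -/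
theorem derived_quotient_G3 :
    Nonempty (Abelianization (commutator G3) ≃* (Fin 4 → Multiplicative (ZMod 4))) := by
  exact ⟨G3w.equivDD.trans G3w.equivPsi.symm⟩
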